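/- arXiv:2204.10259 — 2 statements merged into one kernel-verified Lean document; each statement's English description precedes it below -/
import Mathlib

section
/- For any involution π in the symmetric group S_n, the number inv(π) + exc(π) is even, where inv(π) is the number of inversions of π and exc(π) is the number of excedances of π (indices i with π(i) > i). -/
/-- A clan of length `n`, represented canonically (up to the identification of
clans having the same signs in the same positions and pairs of equal numbers in
the same positions): `sign i = some true` means the symbol `+` at position `i`,
`sign i = some false` means `-`, and `sign i = none` means a natural number,
whose unique partner position (carrying the equal number) is `mate i`. -/
structure Clan (n : ℕ) where
  sign : Fin n → Option Bool
  mate : Fin n → Fin n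
  invol : ∀ i, mate (mate i) = i
  fixed_iff : ∀ i, mate i = i ↔ (sign i).isSome

namespace Clan

variable {n m : ℕ}

/-- The number of `+` signs in a clan. -/
def plusCount (c : Clan n) : ℕ := (Finset.univ.filter fun i => c.sign i = some true).card

/-- The number of `-` signs in a clan. -/
def minusCount (c : Clan n) : ℕ := (Finset.univ.filter fun i => c.sign i = some false).card

/-- The number of pairs of equal natural numbers in a clan. -/
def pairCount (c : Clan n) : ℕ := (Finset.univ.filter fun i => i < c.mate i).card

/-- A clan has signature `(p,q)` if the number of `+` signs plus the number of
distinct numbers is `p`, and the number of `-` signs plus the number of distinct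
numbers is `q`. -/
def HasSignature (c : Clan n) (p q : ℕ) : Prop :=
  c.plusCount + c.pairCount = p ∧ c.minusCount + c.pairCount = q

/-- A symmetric clan: signs are preserved under `i ↦ n+1-i`, no pair of equal
numbers sits at positions `i, n+1-i`, and pairs map to pairs under `i ↦ n+1-i`. -/
def IsSymmetric (c : Clan n) : Prop :=
  (∀ i, (c.sign i).isSome → c.sign i.rev = c.sign i) ∧
  (∀ i, c.mate i ≠ i → c.mate i ≠ i.rev ∧ c.mate i.rev = (c.mate i).rev)

/-- A skew-symmetric clan: signs are reversed under `i ↦ n+1-i` and pairs map to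
pairs (with no condition ruling out a pair at `i, n+1-i`). -/
def IsSkewSymmetric (c : Clan n) : Prop :=
  (∀ i b, c.sign i = some b → c.sign i.rev = some (!b)) ∧
  (∀ i, c.mate i ≠ i → c.mate i.rev = (c.mate i).rev)

/-- The reverse `(c_n, …, c_1)` of a clan `(c_1, …, c_n)`. -/
def reverse (c : Clan n) : Clan n where
  sign i := c.sign i.rev
  mate i := (c.mate i.rev).rev
  invol i := by simp [Fin.rev_rev, c.invol]
  fixed_iff i := by
    constructor
    · intro h
      rw [← c.fixed_iff i.rev]
      have := congrArg Fin.rev h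
      rwa [Fin.rev_rev] at this
    · intro h
      rw [← c.fixed_iff i.rev] at h
      show (c.mate i.rev).rev = i
      rw [h, Fin.rev_rev]

/-- The statistic `ℓ(c) = Σ_{c_i = c_j ∈ ℕ, i<j} (j - i - #{k ∈ ℕ : c_s = c_t = k
for some s < i < t < j})`. -/
def ell (c : Clan n) : ℕ :=
  ∑ i ∈ Finset.univ.filter (fun i => i < c.mate i),
    ((c.mate i : ℕ) - (i : ℕ) -
      (Finset.univ.filter fun s : Fin n =>
        s < c.mate s ∧ s < i ∧ i < c.mate s ∧ c.mate s < c.mate i).card)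

/-- Clan pattern inclusion: `c` includes the clan `d` if there is a strictly
increasing choice of positions along which the subsequence of `c` is a clan
identified with `d` (same signs in the same positions, same pairs of equal
numbers in the same positions). -/
def Includes (c : Clan n) (d : Clan m) : Prop :=
  ∃ k : Fin m → Fin n, StrictMono k ∧ (∀ a, c.sign (k a) = d.sign a) ∧
    ∀ a b : Fin m, c.mate (k a) = k b ↔ d.mate a = b

/-- `c` avoids the pattern `d` if it does not include it. -/
def Avoids (c : Clan n) (d : Clan m) : Prop := ¬ c.Includes d

/-- The number of `+` signs among the first `m` entries plus the number of pairs
of equal numbers both of whose positions are among the first `m` entries. -/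
def halfCount (c : Clan n) (m : ℕ) : ℕ :=
  (Finset.univ.filter fun i : Fin n => (i : ℕ) < m ∧ c.sign i = some true).card
  + (Finset.univ.filter fun i => i < c.mate i ∧ (c.mate i : ℕ) < m).card

end Clan

/-- The pattern `(1,2,1,2)`: two interleaved pairs of equal numbers. -/
def pattern1212 : Clan 4 :=
  ⟨![none, none, none, none], ![2, 3, 0, 1], by decide, by decide⟩

/-- Classical (Schubert-variety) pattern inclusion for permutations. -/
def PermIncludes {n m : ℕ} (w : Equiv.Perm (Fin n)) (v : Fin m → Fin m) : Prop :=
  ∃ k : Fin m → Fin n, StrictMono k ∧ ∀ a b : Fin m, w (k a) < w (k b) ↔ v a < v b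

/-- Involution pattern inclusion (symmetric-variety sense): the chosen index set
must in addition be stable under the involution. -/
def InvolIncludes {n m : ℕ} (π : Equiv.Perm (Fin n)) (μ : Fin m → Fin m) : Prop :=
  ∃ k : Fin m → Fin n, StrictMono k ∧ (∀ a, ∃ b, π (k a) = k b) ∧
    ∀ a b : Fin m, π (k a) < π (k b) ↔ μ a < μ b

/-- Bruhat–Chevalley order on `S_n` via Ehresmann's tableau criterion, in
counting form: `v ≤ w` iff every prefix of `v`, rearranged increasingly, is
entrywise at most the corresponding rearranged prefix of `w`; equivalently, for
all thresholds each prefix of `w` has at least as many large values. -/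
def BruhatLE {n : ℕ} (v w : Equiv.Perm (Fin n)) : Prop :=
  ∀ i a : Fin n,
    (Finset.univ.filter fun j => j ≤ i ∧ a ≤ v j).card ≤
      (Finset.univ.filter fun j => j ≤ i ∧ a ≤ w j).card

/-- The suffix `v(i), …, v(n)` of a signed permutation, rearranged in increasing
order. -/
def sortedSuffix {n : ℕ} (v : Fin n → ℤ) (i : Fin n) : List ℤ :=
  List.insertionSort (· ≤ ·) (((List.finRange n).filter fun j => i ≤ j).map v)

/-- Proctor's criterion for Bruhat order on signed permutations in type `D`:
the type-`C` tableau criterion together with the parity condition. -/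
def DBruhatLE {n : ℕ} (v w : Fin n → ℤ) : Prop :=
  ∀ i : Fin n,
    (∀ j : ℕ, (sortedSuffix w i).getD j 0 ≤ (sortedSuffix v i).getD j 0) ∧
    ∀ k : ℕ,
      (((sortedSuffix v i).take k).map Int.natAbs).toFinset = Finset.Icc 1 k →
      (((sortedSuffix w i).take k).map Int.natAbs).toFinset = Finset.Icc 1 k →
      (((sortedSuffix v i).take k).countP fun x => decide (x < 0)) % 2 =
        (((sortedSuffix w i).take k).countP fun x => decide (x < 0)) % 2

/-- A finset carrying a fixed-point-free involution has even cardinality. -/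
lemma even_card_of_fpf_invol {α : Type*} [DecidableEq α] (s : Finset α) (f : α → α)
    (hmem : ∀ a ∈ s, f a ∈ s) (hinv : ∀ a ∈ s, f (f a) = a) (hne : ∀ a ∈ s, f a ≠ a) :
    Even s.card := by
  induction s using Finset.strongInduction with
  | _ s ih =>
    rcases s.eq_empty_or_nonempty with rfl | ⟨a, ha⟩
    · simp
    · have hfa : f a ∈ s := hmem a ha
      have hfa_ne : f a ≠ a := hne a ha
      set t := (s.erase a).erase (f a) with ht
      have hts : t ⊂ s :=
        Finset.ssubset_of_subset_of_ssubset (Finset.erase_subset _ _) (Finset.erase_ssubset ha)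
      have hmem_t : ∀ b ∈ t, b ∈ s := fun b hb => hts.1 hb
      have h1 : (s.erase a).card = s.card - 1 := Finset.card_erase_of_mem ha
      have h2 : t.card = (s.erase a).card - 1 :=
        Finset.card_erase_of_mem (Finset.mem_erase.mpr ⟨hfa_ne, hfa⟩)
      have hle : 2 ≤ s.card := Finset.one_lt_card.mpr ⟨f a, hfa, a, ha, hfa_ne⟩
      have hcard : s.card = t.card + 2 := by omega
      have het : Even t.card := by
        refine ih t hts (fun b hb => ?_) (fun b hb => hinv b (hmem_t b hb))
          (fun b hb => hne b (hmem_t b hb))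
        have hbs := hmem_t b hb
        rw [ht] at hb ⊢
        simp only [Finset.mem_erase] at hb ⊢
        refine ⟨?_, ?_, hmem b hbs⟩
        · intro h; exact hb.2.1 (by rw [← hinv b hbs, h, hinv a ha])
        · intro h; exact hb.1 (by rw [← hinv b hbs, h])
      exact hcard ▸ het.add even_two


/-- For any involution `π ∈ S_n`, the number `inv(π) + exc(π)` is even, where `inv` is
the number of inversions and `exc` the number of excedances. -/
theorem inv_add_exc_even (n : ℕ) (π : Equiv.Perm (Fin n)) (hπ : π * π = 1) :
    Even ((Finset.univ.filter fun p : Fin n × Fin n => p.1 < p.2 ∧ π p.2 < π p.1).card +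
      (Finset.univ.filter fun i : Fin n => i < π i).card) := by
  have hππ : ∀ x, π (π x) = x := fun x => by
    have := congrArg (fun σ : Equiv.Perm (Fin n) => σ x) hπ
    simpa using this
  set S : Finset (Fin n × Fin n) :=
    Finset.univ.filter fun p : Fin n × Fin n => p.1 < p.2 ∧ π p.2 < π p.1 with hS
  set E : Finset (Fin n) := Finset.univ.filter fun i : Fin n => i < π i with hE
  set g : Fin n × Fin n → Fin n × Fin n := fun p => (π p.2, π p.1) with hg
  have hsplit : S.card = (S.filter fun p => g p = p).card + (S.filter fun p => g p ≠ p).card :=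
    (Finset.card_filter_add_card_filter_not _).symm
  have hfix : (S.filter fun p => g p = p).card = E.card := by
    refine Finset.card_bij (fun p _ => p.1) ?_ ?_ ?_
    · intro p hp
      rw [Finset.mem_filter] at hp
      obtain ⟨hpS, hfixp⟩ := hp
      rw [hS, Finset.mem_filter] at hpS
      rw [hE, Finset.mem_filter]
      have h2 : π p.1 = p.2 := congrArg Prod.snd hfixp
      exact ⟨Finset.mem_univ _, h2 ▸ hpS.2.1⟩
    · intro p hp q hq hpq
      rw [Finset.mem_filter] at hp hq
      have hp2 : π p.1 = p.2 := congrArg Prod.snd hp.2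
      have hq2 : π q.1 = q.2 := congrArg Prod.snd hq.2
      have h1 : p.1 = q.1 := hpq
      exact Prod.ext h1 (by rw [← hp2, ← hq2, h1])
    · intro i hi
      rw [hE, Finset.mem_filter] at hi
      refine ⟨(i, π i), ?_, rfl⟩
      rw [Finset.mem_filter, hS, Finset.mem_filter]
      refine ⟨⟨Finset.mem_univ _, hi.2, by rw [hππ]; exact hi.2⟩, ?_⟩
      show (π (π i), π i) = (i, π i)
      rw [hππ]
  have hmoved : Even (S.filter fun p => g p ≠ p).card := by
    refine even_card_of_fpf_invol _ g ?_ ?_ ?_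
    · intro p hp
      rw [Finset.mem_filter] at hp ⊢
      obtain ⟨hpS, hpne⟩ := hp
      rw [hS, Finset.mem_filter] at hpS
      obtain ⟨-, h12, h21⟩ := hpS
      constructor
      · rw [hS, Finset.mem_filter]
        refine ⟨Finset.mem_univ _, h21, ?_⟩
        show π (π p.1) < π (π p.2)
        rw [hππ, hππ]; exact h12
      · intro h
        have hgg : g (g p) = p := by
          show (π (π p.1), π (π p.2)) = p
          rw [hππ, hππ]
        rw [hgg] at h
        exact hpne h.symm
    · intro p _
      show (π (π p.1), π (π p.2)) = p
      rw [hππ, hππ]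
    · intro p hp; exact (Finset.mem_filter.mp hp).2
  rw [hsplit, hfix]
  have h2 : E.card + (S.filter fun p => g p ≠ p).card + E.card
      = (S.filter fun p => g p ≠ p).card + 2 * E.card := by ring
  rw [h2]
  exact hmoved.add (even_two_mul _)
end

section
/- For every involution π in S_n, the quantity Σ_{i < π(i)} (π(i) - i - #{k : i < k < π(i) and π(k) < i}) equals (inv(π) + exc(π))/2, where inv(π) is the number of inversions of π and exc(π) is the number of excedances of π. -/
/-- For every involution `π ∈ S_n`,
`Σ_{i < π(i)} (π(i) - i - #{k : i < k < π(i), π(k) < i}) = (inv(π) + exc(π)) / 2`. -/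
theorem rank_formula_involution (n : ℕ) (π : Equiv.Perm (Fin n)) (hπ : π * π = 1) :
    (∑ i ∈ Finset.univ.filter (fun i : Fin n => i < π i),
      ((π i : ℕ) - (i : ℕ) -
        (Finset.univ.filter fun k : Fin n => i < k ∧ k < π i ∧ π k < i).card)) =
    ((Finset.univ.filter fun p : Fin n × Fin n => p.1 < p.2 ∧ π p.2 < π p.1).card +
      (Finset.univ.filter fun i : Fin n => i < π i).card) / 2 := by
  classical
  have hinv : ∀ x, π (π x) = x := fun x => by
    have h := congrArg (fun σ : Equiv.Perm (Fin n) => σ x) hπ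
    simpa using h
  have hπne : ∀ a b : Fin n, π a ≠ b ↔ a ≠ π b := by
    intro a b
    constructor
    · intro h h'; exact h (by rw [h', hinv])
    · intro h h'; exact h (by rw [← h', hinv])
  set Arc := Finset.univ.filter fun i : Fin n => i < π i with hArc
  set Inv := Finset.univ.filter fun p : Fin n × Fin n => p.1 < p.2 ∧ π p.2 < π p.1 with hInvDef
  set N := Finset.univ.filter fun p : Fin n × Fin n =>
      p.1 < π p.1 ∧ p.1 < p.2 ∧ p.2 < π p.1 ∧ p.1 ≤ π p.2 with hNdef
  have hsplit : (Inv.filter fun p => π p.1 = p.2).card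
      + (Inv.filter fun p => ¬ π p.1 = p.2).card = Inv.card :=
    Finset.card_filter_add_card_filter_not _
  -- arcs are exactly the inversions with π p.1 = p.2
  have hA : (Inv.filter fun p => π p.1 = p.2).card = Arc.card := by
    apply Finset.card_bij' (fun p _ => p.1) (fun i _ => (i, π i))
    · intro p hp
      simp only [hInvDef, Finset.mem_filter, Finset.mem_univ, true_and] at hp
      simp only [hArc, Finset.mem_filter, Finset.mem_univ, true_and]
      rw [hp.2]; exact hp.1.1
    · intro i hi
      simp only [hArc, Finset.mem_filter, Finset.mem_univ, true_and] at hi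
      simp only [hInvDef, Finset.mem_filter, Finset.mem_univ, true_and, hinv]
      exact ⟨⟨hi, hi⟩, trivial⟩
    · intro p hp
      simp only [hInvDef, Finset.mem_filter, Finset.mem_univ, true_and] at hp
      exact Prod.ext rfl hp.2
    · intro i _; rfl
  -- non-arc inversions are 2-to-1 over N
  have hR : (Inv.filter fun p => ¬ π p.1 = p.2).card = 2 * N.card := by
    have hcard : (Inv.filter fun p => ¬ π p.1 = p.2).card
        = (N ×ˢ (Finset.univ : Finset Bool)).card := by
      apply Finset.card_bij'
        (fun p _ => ((min p.1 (π p.2), max p.1 (π p.2)), decide (p.1 < π p.2)))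
        (fun q _ => cond q.2 (q.1.1, π q.1.2) (q.1.2, π q.1.1))
      · intro p hp
        simp only [hInvDef, Finset.mem_filter, Finset.mem_univ, true_and] at hp
        obtain ⟨⟨h1, h2⟩, h3⟩ := hp
        have hne : p.1 ≠ π p.2 := (hπne _ _).mp h3
        simp only [Finset.mem_product, Finset.mem_univ, and_true]
        simp only [hNdef, Finset.mem_filter, Finset.mem_univ, true_and]
        rcases hne.lt_or_gt with h | h
        · rw [min_eq_left h.le, max_eq_right h.le]
          refine ⟨h.trans h2, h, h2, ?_⟩
          rw [hinv]; exact h1.le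
        · rw [min_eq_right h.le, max_eq_left h.le]
          rw [hinv]
          exact ⟨h.trans h1, h, h1, h2.le⟩
      · intro q hq
        obtain ⟨⟨x, y⟩, b⟩ := q
        simp only [Finset.mem_product, Finset.mem_univ, and_true] at hq
        simp only [hNdef, Finset.mem_filter, Finset.mem_univ, true_and] at hq
        obtain ⟨n1, n2, n3, n4⟩ := hq
        have hxy : x < π y := by
          refine lt_of_le_of_ne n4 fun h => ?_
          have hh : π x = y := by rw [h, hinv]
          exact absurd (hh ▸ n3) (lt_irrefl _)
        simp only [hInvDef, Finset.mem_filter, Finset.mem_univ, true_and]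
        cases b
        · simp only [Bool.cond_false]
          refine ⟨⟨n3, by rw [hinv]; exact hxy⟩, fun h => ?_⟩
          exact absurd (π.injective h) n2.ne'
        · simp only [Bool.cond_true]
          refine ⟨⟨hxy, by rw [hinv]; exact n3⟩, fun h => ?_⟩
          exact absurd (π.injective h) n2.ne
      · intro p hp
        simp only [hInvDef, Finset.mem_filter, Finset.mem_univ, true_and] at hp
        obtain ⟨⟨h1, h2⟩, h3⟩ := hp
        have hne : p.1 ≠ π p.2 := (hπne _ _).mp h3
        rcases hne.lt_or_gt with h | h
        · simp only [h, decide_eq_true_eq, decide_true, Bool.cond_true,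
            min_eq_left h.le, max_eq_right h.le, hinv, Prod.mk.eta]
        · have hnl : ¬ p.1 < π p.2 := not_lt.mpr h.le
          simp only [hnl, decide_false, Bool.cond_false,
            min_eq_right h.le, max_eq_left h.le, hinv, Prod.mk.eta]
      · intro q hq
        obtain ⟨⟨x, y⟩, b⟩ := q
        simp only [Finset.mem_product, Finset.mem_univ, and_true] at hq
        simp only [hNdef, Finset.mem_filter, Finset.mem_univ, true_and] at hq
        obtain ⟨n1, n2, n3, n4⟩ := hq
        cases b
        · simp only [Bool.cond_false, hinv]
          rw [min_eq_right n2.le, max_eq_left n2.le]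
          simp [not_lt.mpr n2.le]
        · simp only [Bool.cond_true, hinv]
          rw [min_eq_left n2.le, max_eq_right n2.le]
          simp [n2]
    rw [hcard, Finset.card_product, Finset.card_univ, Fintype.card_bool, Nat.mul_comm]
  -- per-arc identity
  have key : ∀ i : Fin n, i < π i →
      ((π i : ℕ) - (i : ℕ) -
        (Finset.univ.filter fun k : Fin n => i < k ∧ k < π i ∧ π k < i).card)
      = 1 + (Finset.univ.filter fun k : Fin n => i < k ∧ k < π i ∧ i ≤ π k).card := by
    intro i hi
    have e1 : (Finset.univ.filter fun k : Fin n => i < k ∧ k < π i ∧ π k < i)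
        = (Finset.Ioo i (π i)).filter fun k => π k < i := by
      ext k; simp [Finset.mem_Ioo, and_assoc]
    have e2 : (Finset.univ.filter fun k : Fin n => i < k ∧ k < π i ∧ i ≤ π k)
        = (Finset.Ioo i (π i)).filter fun k => ¬ π k < i := by
      ext k; simp [Finset.mem_Ioo, and_assoc, not_lt]
    have h1 : (Finset.univ.filter fun k : Fin n => i < k ∧ k < π i ∧ π k < i).card
        + (Finset.univ.filter fun k : Fin n => i < k ∧ k < π i ∧ i ≤ π k).card
        = (π i : ℕ) - (i : ℕ) - 1 := by
      rw [e1, e2, Finset.card_filter_add_card_filter_not, Fin.card_Ioo]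
    have hi' : (i : ℕ) < (π i : ℕ) := hi
    omega
  have hsum : (∑ i ∈ Arc, ((π i : ℕ) - (i : ℕ) -
        (Finset.univ.filter fun k : Fin n => i < k ∧ k < π i ∧ π k < i).card))
      = Arc.card + ∑ i ∈ Arc,
        (Finset.univ.filter fun k : Fin n => i < k ∧ k < π i ∧ i ≤ π k).card := by
    rw [Finset.sum_congr rfl fun i hi => key i (by
      simpa only [hArc, Finset.mem_filter, Finset.mem_univ, true_and] using hi)]
    rw [Finset.sum_add_distrib, Finset.sum_const, smul_eq_mul, mul_one]
  have hN : N.card = ∑ i ∈ Arc,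
      (Finset.univ.filter fun k : Fin n => i < k ∧ k < π i ∧ i ≤ π k).card := by
    rw [hArc, Finset.sum_filter, hNdef, Finset.card_filter,
      ← Finset.univ_product_univ, Finset.sum_product]
    refine Finset.sum_congr rfl fun i _ => ?_
    by_cases h : i < π i
    · simp only [h, true_and, if_true]
      rw [Finset.card_filter]
    · simp [h]
  rw [hsum]
  omega
end
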